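/- Let n, i, j be integers with i ≥ j ≥ 0, i + j ≤ n and i + j ≡ n (mod 2), and let δ_i be the remainder of i modulo 2. Then the number of pairs (P,Q) of lattice paths of length n satisfying −P ≤ Q ≤ P, h(P) = i + j and h(Q) = i − j equals the number of pairs (P,Q) of lattice paths of length n satisfying Q ≤ P, h(P) = j + δ_i, h(Q) = −j + δ_i, and min over 0 ≤ a ≤ n of (h_a(P) + h_a(Q))/2 equal to −⌊i/2⌋. -/

import Mathlib

/-- A lattice path of length `n`: each step is `+1` (U) or `-1` (D). -/
def IsPath {n : ℕ} (P : Fin n → ℤ) : Prop := ∀ l, P l = 1 ∨ P l = -1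

/-- Height of the path `P` at `x = a`: sum of the first `a` steps. -/
def ht {n : ℕ} (P : Fin n → ℤ) (a : ℕ) : ℤ :=
  ∑ l ∈ Finset.univ.filter (fun l : Fin n => (l : ℕ) < a), P l

/-- The lowest height of the agreement path `(P+Q)/2`, over `0 ≤ a ≤ n`. -/
def agreeMin {n : ℕ} (P Q : Fin n → ℤ) : ℤ :=
  (Finset.range (n + 1)).inf' Finset.nonempty_range_add_one
    (fun a => (ht P a + ht Q a) / 2)

section basic
variable {n : ℕ} (P : Fin n → ℤ)

lemma ht_zero : ht P 0 = 0 := by simp [ht]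

lemma ht_succ {a : ℕ} (ha : a < n) : ht P (a + 1) = ht P a + P ⟨a, ha⟩ := by
  unfold ht
  rw [show (Finset.univ.filter (fun l : Fin n => (l : ℕ) < a + 1))
      = insert ⟨a, ha⟩ (Finset.univ.filter (fun l : Fin n => (l : ℕ) < a)) by
    ext l; simp [Nat.lt_succ_iff_lt_or_eq, Fin.ext_iff, or_comm]; omega]
  rw [Finset.sum_insert (by simp)]
  ring

lemma ht_stable {a : ℕ} (ha : n ≤ a) : ht P a = ht P n := by
  unfold ht
  apply Finset.sum_congr _ (fun _ _ => rfl)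
  ext l; simp [l.2, lt_of_lt_of_le l.2 ha]

lemma ht_congr {P' : Fin n → ℤ} {a : ℕ} (h : ∀ l : Fin n, (l : ℕ) < a → P l = P' l) :
    ht P a = ht P' a :=
  Finset.sum_congr rfl (by simpa using h)

end basic

section refl
variable {n : ℕ}

/-- Negate the "agreement" path after time `t`, keeping the "difference" path. -/
def reflAt (t : ℕ) (PQ : (Fin n → ℤ) × (Fin n → ℤ)) : (Fin n → ℤ) × (Fin n → ℤ) :=
  (fun l => if (l : ℕ) < t then PQ.1 l else -PQ.2 l,
   fun l => if (l : ℕ) < t then PQ.2 l else -PQ.1 l)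

lemma reflAt_invol (t : ℕ) (PQ : (Fin n → ℤ) × (Fin n → ℤ)) :
    reflAt t (reflAt t PQ) = PQ := by
  unfold reflAt
  refine Prod.ext (funext fun l => ?_) (funext fun l => ?_) <;> simp <;> split_ifs <;> simp

lemma reflAt_isPath (t : ℕ) {PQ : (Fin n → ℤ) × (Fin n → ℤ)}
    (h1 : IsPath PQ.1) (h2 : IsPath PQ.2) :
    IsPath (reflAt t PQ).1 ∧ IsPath (reflAt t PQ).2 := by
  constructor <;> intro l <;> simp only [reflAt] <;> split_ifs
  · exact h1 l
  · rcases h2 l with h | h <;> simp [h]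
  · exact h2 l
  · rcases h1 l with h | h <;> simp [h]

lemma reflAt_ht_le {t a : ℕ} (hat : a ≤ t) (PQ : (Fin n → ℤ) × (Fin n → ℤ)) :
    ht (reflAt t PQ).1 a = ht PQ.1 a ∧ ht (reflAt t PQ).2 a = ht PQ.2 a := by
  constructor <;>
    exact (ht_congr _ (fun l hl => by simp [reflAt, lt_of_lt_of_le hl hat])).symm

lemma reflAt_ht_ge {t a : ℕ} (hat : t ≤ a) (PQ : (Fin n → ℤ) × (Fin n → ℤ)) :
    ht (reflAt t PQ).1 a = ht PQ.1 t + ht PQ.2 t - ht PQ.2 a ∧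
    ht (reflAt t PQ).2 a = ht PQ.2 t + ht PQ.1 t - ht PQ.1 a := by
  induction a, hat using Nat.le_induction with
  | base =>
    obtain ⟨h1, h2⟩ := reflAt_ht_le (le_refl t) PQ
    constructor <;> omega
  | succ a hat ih =>
    by_cases ha : a < n
    · have h1 : (reflAt t PQ).1 ⟨a, ha⟩ = -PQ.2 ⟨a, ha⟩ := by
        simp only [reflAt]; rw [if_neg (by simp; omega)]
      have h2 : (reflAt t PQ).2 ⟨a, ha⟩ = -PQ.1 ⟨a, ha⟩ := by
        simp only [reflAt]; rw [if_neg (by simp; omega)]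
      rw [ht_succ _ ha, ht_succ _ ha, ht_succ _ ha, ht_succ _ ha, h1, h2]
      constructor <;> omega
    · have e : ∀ X : Fin n → ℤ, ht X (a + 1) = ht X a := fun X => by
        rw [ht_stable X (by omega), ht_stable X (le_of_not_gt ha)]
      rw [e, e, e, e]; exact ih
end refl

section msum
variable {n : ℕ}

def msum (PQ : (Fin n → ℤ) × (Fin n → ℤ)) (a : ℕ) : ℤ := ht PQ.1 a + ht PQ.2 a

lemma msum_zero (PQ : (Fin n → ℤ) × (Fin n → ℤ)) : msum PQ 0 = 0 := by
  simp [msum, ht_zero]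

lemma msum_even {PQ : (Fin n → ℤ) × (Fin n → ℤ)} (h1 : IsPath PQ.1) (h2 : IsPath PQ.2) :
    ∀ a, 2 ∣ msum PQ a := by
  intro a
  induction a with
  | zero => simp [msum_zero]
  | succ a ih =>
    by_cases ha : a < n
    · have : msum PQ (a + 1) = msum PQ a + (PQ.1 ⟨a, ha⟩ + PQ.2 ⟨a, ha⟩) := by
        simp [msum, ht_succ _ ha]; ring
      rw [this]
      rcases h1 ⟨a, ha⟩ with h | h <;> rcases h2 ⟨a, ha⟩ with h' | h' <;>
        rw [h, h'] <;> omega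
    · have : msum PQ (a + 1) = msum PQ a := by
        simp [msum, ht_stable _ (by omega : n ≤ a + 1), ht_stable _ (le_of_not_gt ha)]
      rw [this]; exact ih

lemma msum_step {PQ : (Fin n → ℤ) × (Fin n → ℤ)} (h1 : IsPath PQ.1) (h2 : IsPath PQ.2)
    (a : ℕ) : msum PQ a - 2 ≤ msum PQ (a + 1) ∧ msum PQ (a + 1) ≤ msum PQ a + 2 := by
  by_cases ha : a < n
  · have : msum PQ (a + 1) = msum PQ a + (PQ.1 ⟨a, ha⟩ + PQ.2 ⟨a, ha⟩) := by
      simp [msum, ht_succ _ ha]; ring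
    rcases h1 ⟨a, ha⟩ with h | h <;> rcases h2 ⟨a, ha⟩ with h' | h' <;> omega
  · have : msum PQ (a + 1) = msum PQ a := by
      simp [msum, ht_stable _ (by omega : n ≤ a + 1), ht_stable _ (le_of_not_gt ha)]
    omega

/-- Discrete intermediate value theorem: if the (even) agreement sum gets `≤ 2c ≤ 0`,
it hits `2c` exactly, at some time `≤ n`. -/
lemma msum_ivt {PQ : (Fin n → ℤ) × (Fin n → ℤ)} (h1 : IsPath PQ.1) (h2 : IsPath PQ.2)
    {c : ℤ} (hc : c ≤ 0) {a : ℕ} (ha : a ≤ n) (hle : msum PQ a ≤ 2 * c) :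
    ∃ b ≤ n, msum PQ b = 2 * c := by
  induction a with
  | zero =>
    refine ⟨0, Nat.zero_le n, ?_⟩
    have := msum_zero PQ; omega
  | succ a ih =>
    by_cases h : msum PQ a ≤ 2 * c
    · exact ih (by omega) h
    · refine ⟨a + 1, ha, ?_⟩
      have he := msum_even h1 h2 a
      have := (msum_step h1 h2 a).1
      omega
end msum

section pred
variable (n : ℕ) (j : ℤ)

def BaseP (PQ : (Fin n → ℤ) × (Fin n → ℤ)) : Prop :=
  IsPath PQ.1 ∧ IsPath PQ.2 ∧ (∀ a ≤ n, ht PQ.2 a ≤ ht PQ.1 a) ∧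
    ht PQ.1 n - ht PQ.2 n = 2 * j

def FP (e : ℤ) (PQ : (Fin n → ℤ) × (Fin n → ℤ)) : Prop :=
  BaseP n j PQ ∧ msum PQ n = 2 * e

def GP (c e : ℤ) (PQ : (Fin n → ℤ) × (Fin n → ℤ)) : Prop :=
  FP n j e PQ ∧ ∃ a, a ≤ n ∧ msum PQ a = 2 * c

end pred

section tc
variable {n : ℕ}

/-- Reflect the agreement path after its first passage to level `c` (if any). -/
noncomputable def Tc (c : ℤ) (PQ : (Fin n → ℤ) × (Fin n → ℤ)) :
    (Fin n → ℤ) × (Fin n → ℤ) :=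
  if h : ∃ a, a ≤ n ∧ msum PQ a = 2 * c then reflAt (Nat.find h) PQ else PQ

lemma reflAt_msum_le {t a : ℕ} (hat : a ≤ t) (PQ : (Fin n → ℤ) × (Fin n → ℤ)) :
    msum (reflAt t PQ) a = msum PQ a := by
  obtain ⟨h1, h2⟩ := reflAt_ht_le hat PQ
  simp [msum, h1, h2]

lemma reflAt_msum_ge {t a : ℕ} (hat : t ≤ a) (PQ : (Fin n → ℤ) × (Fin n → ℤ)) :
    msum (reflAt t PQ) a = 2 * msum PQ t - msum PQ a := by
  obtain ⟨h1, h2⟩ := reflAt_ht_ge hat PQ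
  simp [msum, h1, h2]; ring

lemma reflAt_diff (t a : ℕ) (PQ : (Fin n → ℤ) × (Fin n → ℤ)) :
    ht (reflAt t PQ).1 a - ht (reflAt t PQ).2 a = ht PQ.1 a - ht PQ.2 a := by
  rcases le_total a t with h | h
  · obtain ⟨h1, h2⟩ := reflAt_ht_le h PQ; rw [h1, h2]
  · obtain ⟨h1, h2⟩ := reflAt_ht_ge h PQ; rw [h1, h2]; ring

lemma Tc_maps {j c e : ℤ} {PQ : (Fin n → ℤ) × (Fin n → ℤ)}
    (h : GP n j c e PQ) : GP n j c (2 * c - e) (Tc c PQ) := by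
  obtain ⟨⟨hP, hQ, hle, hD⟩, hS⟩ := h.1
  have hex := h.2
  have hTc : Tc c PQ = reflAt (Nat.find hex) PQ := dif_pos hex
  set t := Nat.find hex with ht'
  obtain ⟨htn, htv⟩ := Nat.find_spec hex
  obtain ⟨hP', hQ'⟩ := reflAt_isPath t hP hQ
  rw [hTc]
  refine ⟨⟨⟨hP', hQ', fun a ha => ?_, ?_⟩, ?_⟩, ⟨t, htn, ?_⟩⟩
  · have := reflAt_diff t a PQ
    have := hle a ha
    omega
  · have := reflAt_diff t n PQ; omega
  · rw [reflAt_msum_ge htn PQ, htv]; omega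
  · rw [reflAt_msum_le (le_refl t) PQ]; exact htv

lemma Tc_invol (c : ℤ) : Function.Involutive (Tc (n := n) c) := by
  intro PQ
  by_cases hex : ∃ a, a ≤ n ∧ msum PQ a = 2 * c
  · have hTc : Tc c PQ = reflAt (Nat.find hex) PQ := dif_pos hex
    set t := Nat.find hex with ht'
    obtain ⟨htn, htv⟩ := Nat.find_spec hex
    have hex' : ∃ a, a ≤ n ∧ msum (reflAt t PQ) a = 2 * c :=
      ⟨t, htn, by rw [reflAt_msum_le (le_refl t) PQ]; exact htv⟩
    have hTc2 : Tc c (reflAt t PQ) = reflAt (Nat.find hex') (reflAt t PQ) := dif_pos hex'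
    have hfind : Nat.find hex' = t := by
      rw [Nat.find_eq_iff]
      refine ⟨⟨htn, by rw [reflAt_msum_le (le_refl t) PQ]; exact htv⟩, fun b hb => ?_⟩
      have := Nat.find_min hex hb
      rw [reflAt_msum_le (le_of_lt hb) PQ]
      tauto
    rw [hTc, hTc2, hfind, reflAt_invol]
  · have h1 : Tc c PQ = PQ := dif_neg hex
    rw [h1, h1]
end tc

section cards
variable {n : ℕ} {j : ℤ}

lemma finite_of_path (p : (Fin n → ℤ) × (Fin n → ℤ) → Prop)
    (hp : ∀ x, p x → IsPath x.1 ∧ IsPath x.2) : Finite {x // p x} := by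
  apply Finite.of_injective (fun x : {x // p x} =>
    ((fun l => decide (x.1.1 l = 1), fun l => decide (x.1.2 l = 1)) :
      (Fin n → Bool) × (Fin n → Bool)))
  rintro ⟨x, hx⟩ ⟨y, hy⟩ hxy
  obtain ⟨hx1, hx2⟩ := hp x hx
  obtain ⟨hy1, hy2⟩ := hp y hy
  simp only [Prod.mk.injEq] at hxy
  obtain ⟨h1, h2⟩ := hxy
  ext1; refine Prod.ext (funext fun l => ?_) (funext fun l => ?_)
  · have := congrFun h1 l
    rcases hx1 l with h | h <;> rcases hy1 l with h' | h' <;> simp [h, h'] at this ⊢ <;> omega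
  · have := congrFun h2 l
    rcases hx2 l with h | h <;> rcases hy2 l with h' | h' <;> simp [h, h'] at this ⊢ <;> omega

lemma gp_card (c e : ℤ) :
    Nat.card {x // GP n j c e x} = Nat.card {x // GP n j c (2 * c - e) x} := by
  apply Nat.card_congr
  refine Equiv.subtypeEquiv (Tc_invol c).toPerm (fun x => ⟨fun h => Tc_maps h, fun h => ?_⟩)
  have := Tc_maps h
  rwa [show (2 * c - (2 * c - e)) = e by ring, Function.Involutive.toPerm,
    Equiv.coe_fn_mk, Tc_invol c x] at this

lemma gp_eq_fp_of_le {c e : ℤ} (he : e ≤ c) (hc : c ≤ 0)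
    (x : (Fin n → ℤ) × (Fin n → ℤ)) : GP n j c e x ↔ FP n j e x := by
  refine ⟨fun h => h.1, fun h => ⟨h, ?_⟩⟩
  obtain ⟨⟨h1, h2, _, _⟩, hS⟩ := h
  exact msum_ivt h1 h2 hc (le_refl n) (by omega)

lemma gp_zero_eq_fp (e : ℤ) (x : (Fin n → ℤ) × (Fin n → ℤ)) :
    GP n j 0 e x ↔ FP n j e x :=
  ⟨fun h => h.1, fun h => ⟨h, 0, Nat.zero_le n, by simp [msum_zero]⟩⟩

lemma card_split (p q : (Fin n → ℤ) × (Fin n → ℤ) → Prop)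
    (hp : ∀ x, p x → IsPath x.1 ∧ IsPath x.2) :
    Nat.card {x // p x} =
      Nat.card {x // p x ∧ q x} + Nat.card {x // p x ∧ ¬ q x} := by
  classical
  have : Finite {x // p x} := finite_of_path p hp
  rw [Nat.card_congr ((Equiv.sumCompl (fun y : {x // p x} => q y.1)).symm), Nat.card_sum,
    Nat.card_congr (Equiv.subtypeSubtypeEquivSubtypeInter p q),
    Nat.card_congr (Equiv.subtypeSubtypeEquivSubtypeInter p (fun x => ¬ q x))]

end cards

section agree
variable {n : ℕ}

lemma half_eq {s v : ℤ} (h : 2 ∣ s) : (s / 2 = v ↔ s = 2 * v) ∧ (v ≤ s / 2 ↔ 2 * v ≤ s) := by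
  obtain ⟨r, rfl⟩ := h
  rw [Int.mul_ediv_cancel_left _ two_ne_zero]
  omega

lemma agreeMin_eq_iff {P Q : Fin n → ℤ} (h1 : IsPath P) (h2 : IsPath Q) (v : ℤ) :
    agreeMin P Q = v ↔
      (∀ a ≤ n, 2 * v ≤ msum (P, Q) a) ∧ ∃ a, a ≤ n ∧ msum (P, Q) a = 2 * v := by
  have he : ∀ a, 2 ∣ msum (P, Q) a := msum_even (PQ := (P, Q)) h1 h2
  have hf : ∀ a, (ht P a + ht Q a) / 2 = msum (P, Q) a / 2 := fun a => rfl
  constructor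
  · intro h
    refine ⟨fun a ha => ?_, ?_⟩
    · have hm : a ∈ Finset.range (n + 1) := Finset.mem_range.mpr (by omega)
      have := Finset.inf'_le (fun a => (ht P a + ht Q a) / 2) hm
      rw [agreeMin] at h
      rw [hf a] at this
      exact ((half_eq (he a)).2).mp (by omega)
    · obtain ⟨a, ha, hav⟩ := Finset.exists_mem_eq_inf' (Finset.nonempty_range_add_one (n := n))
        (fun a => (ht P a + ht Q a) / 2)
      rw [agreeMin] at h
      refine ⟨a, Nat.lt_succ_iff.mp (Finset.mem_range.mp ha), ?_⟩
      have hfa : msum (P, Q) a / 2 = v := by rw [← hf a, ← hav]; exact h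
      exact ((half_eq (he a)).1).mp hfa
  · rintro ⟨hall, a, ha, hav⟩
    refine le_antisymm ?_ ?_
    · have hm : a ∈ Finset.range (n + 1) := Finset.mem_range.mpr (by omega)
      have h2 := Finset.inf'_le (fun a => (ht P a + ht Q a) / 2) hm
      have hfa : (ht P a + ht Q a) / 2 = v := by
        rw [hf a]; exact ((half_eq (he a)).1).mpr hav
      rw [agreeMin]
      omega
    · apply Finset.le_inf'
      intro b hb
      rw [hf b]
      exact ((half_eq (he b)).2).mpr (hall b (Nat.lt_succ_iff.mp (Finset.mem_range.mp hb)))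
end agree

section main
variable {n : ℕ}

lemma nohit_iff {x : (Fin n → ℤ) × (Fin n → ℤ)} (h1 : IsPath x.1) (h2 : IsPath x.2)
    {m : ℤ} (hm : 0 ≤ m) :
    (∀ a ≤ n, 2 * (-m) ≤ msum x a) ↔ ¬ ∃ a, a ≤ n ∧ msum x a = 2 * (-m - 1) := by
  constructor
  · rintro h ⟨a, ha, hv⟩
    have := h a ha; omega
  · intro h a ha
    by_contra hcon
    have he := msum_even h1 h2 a
    exact h (msum_ivt h1 h2 (by omega : -m - 1 ≤ 0) ha (by omega))

lemma left_iff (i j : ℤ) (x : (Fin n → ℤ) × (Fin n → ℤ)) :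
    (IsPath x.1 ∧ IsPath x.2 ∧
      (∀ a ≤ n, -ht x.1 a ≤ ht x.2 a ∧ ht x.2 a ≤ ht x.1 a) ∧
      ht x.1 n = i + j ∧ ht x.2 n = i - j) ↔
    (FP n j i x ∧ ∀ a ≤ n, 2 * (-(0:ℤ)) ≤ msum x a) := by
  unfold FP BaseP msum
  constructor
  · rintro ⟨h1, h2, h3, h4, h5⟩
    exact ⟨⟨⟨h1, h2, fun a ha => (h3 a ha).2, by omega⟩, by omega⟩,
      fun a ha => by have := (h3 a ha).1; omega⟩
  · rintro ⟨⟨⟨h1, h2, h3, hD⟩, hS⟩, h0⟩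
    exact ⟨h1, h2, fun a ha => ⟨by have := h0 a ha; omega, h3 a ha⟩, by omega, by omega⟩

lemma right_iff (j k δ : ℤ) (hk : 0 ≤ k) (x : (Fin n → ℤ) × (Fin n → ℤ)) :
    (IsPath x.1 ∧ IsPath x.2 ∧
      (∀ a ≤ n, ht x.2 a ≤ ht x.1 a) ∧
      ht x.1 n = j + δ ∧ ht x.2 n = -j + δ ∧ agreeMin x.1 x.2 = -k) ↔
    (GP n j (-k) δ x ∧ ¬ ∃ a, a ≤ n ∧ msum x a = 2 * (-k - 1)) := by
  constructor
  · rintro ⟨h1, h2, h3, h4, h5, h6⟩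
    obtain ⟨hall, hex⟩ := (agreeMin_eq_iff h1 h2 (-k)).mp h6
    refine ⟨⟨⟨⟨h1, h2, h3, by unfold msum at *; omega⟩, by unfold msum at *; omega⟩, hex⟩, ?_⟩
    exact (nohit_iff h1 h2 hk).mp hall
  · rintro ⟨⟨⟨⟨h1, h2, h3, hD⟩, hS⟩, hex⟩, hno⟩
    have hall := (nohit_iff h1 h2 hk).mpr hno
    exact ⟨h1, h2, h3, by unfold msum at *; omega, by unfold msum at *; omega,
      (agreeMin_eq_iff h1 h2 (-k)).mpr ⟨hall, hex⟩⟩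

lemma fp_card_neg (j e : ℤ) :
    Nat.card {x // FP n j e x} = Nat.card {x // FP n j (-e) x} := by
  rw [← Nat.card_congr (Equiv.subtypeEquivRight (gp_zero_eq_fp (j := j) e)),
    ← Nat.card_congr (Equiv.subtypeEquivRight (gp_zero_eq_fp (j := j) (-e))),
    gp_card 0 e, show 2 * (0:ℤ) - e = -e by ring]

lemma gp_card_fp (j c e : ℤ) (hc : c ≤ 0) (hce : c ≤ e) :
    Nat.card {x // GP n j c e x} = Nat.card {x // FP n j (2 * c - e) x} := by
  rw [gp_card c e, Nat.card_congr (Equiv.subtypeEquivRight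
    (gp_eq_fp_of_le (by omega) hc))]

end main

theorem stmt1 (n : ℕ) (i j : ℤ) (hj : 0 ≤ j) (hij : j ≤ i) (hn : i + j ≤ (n : ℤ))
    (hpar : (i + j) % 2 = (n : ℤ) % 2) :
    Nat.card {PQ : (Fin n → ℤ) × (Fin n → ℤ) //
      IsPath PQ.1 ∧ IsPath PQ.2 ∧
      (∀ a ≤ n, -ht PQ.1 a ≤ ht PQ.2 a ∧ ht PQ.2 a ≤ ht PQ.1 a) ∧
      ht PQ.1 n = i + j ∧ ht PQ.2 n = i - j} =
    Nat.card {PQ : (Fin n → ℤ) × (Fin n → ℤ) //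
      IsPath PQ.1 ∧ IsPath PQ.2 ∧
      (∀ a ≤ n, ht PQ.2 a ≤ ht PQ.1 a) ∧
      ht PQ.1 n = j + i % 2 ∧ ht PQ.2 n = -j + i % 2 ∧
      agreeMin PQ.1 PQ.2 = -(i / 2)} := by
  set k := i / 2 with hk'
  set δ := i % 2 with hδ'
  have hi : 0 ≤ i := le_trans hj hij
  have hkd : i = 2 * k + δ := by omega
  have hδ : 0 ≤ δ ∧ δ ≤ 1 := by omega
  have hk : 0 ≤ k := by omega
  -- rewrite both sides via predicate translations
  rw [Nat.card_congr (Equiv.subtypeEquivRight (left_iff i j)),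
    Nat.card_congr (Equiv.subtypeEquivRight (right_iff j k δ hk))]
  -- split F(i)
  have e1 := card_split (n := n) (FP n j i)
    (fun x => ∃ a, a ≤ n ∧ msum x a = 2 * (-(0:ℤ) - 1))
    (fun x hx => ⟨hx.1.1, hx.1.2.1⟩)
  -- split G(-k, δ)
  have e2 := card_split (n := n) (GP n j (-k) δ)
    (fun x => ∃ a, a ≤ n ∧ msum x a = 2 * (-k - 1))
    (fun x hx => ⟨hx.1.1.1, hx.1.1.2.1⟩)
  -- identify the "hit" parts with GP-sets
  have e3 : Nat.card {x // FP n j i x ∧ ∃ a, a ≤ n ∧ msum x a = 2 * (-(0:ℤ) - 1)}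
      = Nat.card {x // GP n j (-1) i x} := by
    apply Nat.card_congr (Equiv.subtypeEquivRight _)
    intro x
    unfold GP
    constructor
    · rintro ⟨h1, a, ha, hv⟩; exact ⟨h1, a, ha, by omega⟩
    · rintro ⟨h1, a, ha, hv⟩; exact ⟨h1, a, ha, by omega⟩
  have e4 : Nat.card {x // GP n j (-k) δ x ∧ ∃ a, a ≤ n ∧ msum x a = 2 * (-k - 1)}
      = Nat.card {x // GP n j (-k - 1) δ x} := by
    apply Nat.card_congr (Equiv.subtypeEquivRight _)
    intro x
    unfold GP
    constructor
    · rintro ⟨⟨h1, _⟩, hex⟩; exact ⟨h1, hex⟩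
    · rintro ⟨h1, a, ha, hv⟩
      refine ⟨⟨h1, msum_ivt h1.1.1 h1.1.2.1 (by omega) ha (by omega)⟩, a, ha, hv⟩
  beta_reduce at e1 e2
  have e5 : Nat.card {x : (Fin n → ℤ) × (Fin n → ℤ) //
        FP n j i x ∧ ∀ a ≤ n, 2 * (-(0:ℤ)) ≤ msum x a}
      = Nat.card {x : (Fin n → ℤ) × (Fin n → ℤ) //
        FP n j i x ∧ ¬∃ a, a ≤ n ∧ msum x a = 2 * (-(0:ℤ) - 1)} :=
    Nat.card_congr (Equiv.subtypeEquivRight fun x =>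
      and_congr_right fun h => nohit_iff h.1.1 h.1.2.1 le_rfl)
  -- card computations via reflections
  have c1 : Nat.card {x // GP n j (-1) i x} = Nat.card {x // FP n j (i + 2) x} := by
    rw [gp_card_fp j (-1) i (by omega) (by omega),
      show 2 * (-1 : ℤ) - i = -(i + 2) by ring, ← fp_card_neg]
  have c2 : Nat.card {x // GP n j (-k) δ x} = Nat.card {x // FP n j i x} := by
    rw [gp_card_fp j (-k) δ (by omega) (by omega),
      show 2 * (-k : ℤ) - δ = -i by omega, ← fp_card_neg]
  have c3 : Nat.card {x // GP n j (-k - 1) δ x} = Nat.card {x // FP n j (i + 2) x} := by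
    rw [gp_card_fp j (-k - 1) δ (by omega) (by omega),
      show 2 * (-k - 1 : ℤ) - δ = -(i + 2) by omega, ← fp_card_neg]
  omega
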